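/- Let m > 0 and λ, λ' > 0, and let f : ℝ³ → ℂ be measurable with ∫_{ℝ³} (1+|p|²)^{−1/2} |f(p)|² dp < ∞. Then ∬_{ℝ³×ℝ³} ( conj(f(p)) − conj(f(q)) )( f(p) − f(q) ) / ( (G(p,q)+λ')(G(p,q)+λ) ) dp dq = 2 ∫_{ℝ³} conj(f(p)) ( 2π² f(p) / ( √(ν|p|²+λ) + √(ν|p|²+λ') ) − ∫_{ℝ³} f(q) / ( (G(p,q)+λ)(G(p,q)+λ') ) dq ) dp. -/

import Mathlib

open MeasureTheory
open scoped RealInnerProductSpace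

noncomputable section

abbrev E3 := EuclideanSpace ℝ (Fin 3)

def mu (m : ℝ) : ℝ := 2 / (m + 1)

def nu (m : ℝ) : ℝ := m * (m + 2) / (m + 1) ^ 2

def Gker (m : ℝ) (p q : E3) : ℝ := ‖p‖ ^ 2 + ‖q‖ ^ 2 + mu m * ⟪p, q⟫


open Real Filter Set

namespace PotAux

lemma hasDerivAt_sa (s : ℝ) (hs : 0 < s) (x : ℝ) :
    HasDerivAt (fun r : ℝ => s * Real.arctan (r / s)) (s ^ 2 / (s ^ 2 + x ^ 2)) x := by
  have h1 : HasDerivAt (fun r : ℝ => r / s) (1 / s) x := by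
    simpa using (hasDerivAt_id x).div_const s
  have h2 := (Real.hasDerivAt_arctan (x / s)).comp x h1
  have h3 := h2.const_mul s
  refine h3.congr_deriv ?_
  have hx : (0:ℝ) < s ^ 2 + x ^ 2 := by positivity
  field_simp

lemma tendsto_sa (s : ℝ) (hs : 0 < s) :
    Tendsto (fun r : ℝ => s * Real.arctan (r / s)) atTop (nhds (s * (π / 2))) := by
  have h1 : Tendsto (fun r : ℝ => r / s) atTop atTop := tendsto_id.atTop_div_const hs
  exact ((Real.tendsto_arctan_atTop.mono_right nhdsWithin_le_nhds).comp h1).const_mul s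

lemma oneD (s t : ℝ) (hs : 0 < s) (ht : 0 < t) :
    IntegrableOn (fun r : ℝ => r ^ 2 / ((r ^ 2 + s ^ 2) * (r ^ 2 + t ^ 2))) (Ioi 0) ∧
      ∫ r in Ioi (0:ℝ), r ^ 2 / ((r ^ 2 + s ^ 2) * (r ^ 2 + t ^ 2)) = π / (2 * (s + t)) := by
  have hnonneg : ∀ x ∈ Ioi (0:ℝ), 0 ≤ x ^ 2 / ((x ^ 2 + s ^ 2) * (x ^ 2 + t ^ 2)) := by
    intro x _; positivity
  rcases eq_or_ne s t with rfl | hst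
  · set g : ℝ → ℝ := fun r => s * Real.arctan (r / s) / (2 * s ^ 2) - r / (2 * (r ^ 2 + s ^ 2))
      with hg
    have hderiv : ∀ x ∈ Ici (0:ℝ),
        HasDerivAt g (x ^ 2 / ((x ^ 2 + s ^ 2) * (x ^ 2 + s ^ 2))) x := by
      intro x _
      have hden : HasDerivAt (fun r : ℝ => 2 * (r ^ 2 + s ^ 2)) (2 * (2 * x ^ 1)) x :=
        ((hasDerivAt_pow 2 x).add_const (s ^ 2)).const_mul 2
      have hq : HasDerivAt (fun r : ℝ => r / (2 * (r ^ 2 + s ^ 2)))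
          ((1 * (2 * (x ^ 2 + s ^ 2)) - x * (2 * (2 * x ^ 1))) / (2 * (x ^ 2 + s ^ 2)) ^ 2) x :=
        (hasDerivAt_id x).div hden (by positivity)
      have := (((hasDerivAt_sa s hs x)).div_const (2 * s ^ 2)).sub hq
      refine this.congr_deriv ?_
      have h1 : (0:ℝ) < x ^ 2 + s ^ 2 := by positivity
      field_simp
      ring
    have htend : Tendsto g atTop (nhds (s * (π / 2) / (2 * s ^ 2) - 0)) := by
      apply Tendsto.sub (((tendsto_sa s hs)).div_const _)
      have hb : Tendsto (fun r : ℝ => (2 * r)⁻¹) atTop (nhds 0) :=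
        tendsto_inv_atTop_zero.comp (tendsto_id.const_mul_atTop two_pos)
      apply squeeze_zero' (by filter_upwards [eventually_gt_atTop 0] with r hr; positivity)
        _ hb
      filter_upwards [eventually_gt_atTop 0] with r hr
      rw [div_le_iff₀ (by positivity), inv_mul_eq_div, le_div_iff₀ (by positivity)]
      nlinarith
    have hval : s * (π / 2) / (2 * s ^ 2) - 0 - g 0 = π / (2 * (s + s)) := by
      simp [hg, Real.arctan_zero]
      field_simp
      ring
    refine ⟨integrableOn_Ioi_deriv_of_nonneg' hderiv hnonneg htend, ?_⟩
    rw [integral_Ioi_of_hasDerivAt_of_nonneg' hderiv hnonneg htend, hval]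
  · have hst2 : t ^ 2 - s ^ 2 ≠ 0 := by
      intro h; rcases hst.lt_or_gt with h'|h' <;> nlinarith
    set g : ℝ → ℝ := fun r =>
      (t * Real.arctan (r / t) - s * Real.arctan (r / s)) / (t ^ 2 - s ^ 2) with hg
    have hderiv : ∀ x ∈ Ici (0:ℝ),
        HasDerivAt g (x ^ 2 / ((x ^ 2 + s ^ 2) * (x ^ 2 + t ^ 2))) x := by
      intro x _
      have := (((hasDerivAt_sa t ht x)).sub (hasDerivAt_sa s hs x)).div_const (t ^ 2 - s ^ 2)
      refine this.congr_deriv ?_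
      have h1 : (0:ℝ) < x ^ 2 + s ^ 2 := by positivity
      have h2 : (0:ℝ) < x ^ 2 + t ^ 2 := by positivity
      field_simp
      ring
    have htend : Tendsto g atTop
        (nhds ((t * (π / 2) - s * (π / 2)) / (t ^ 2 - s ^ 2))) :=
      ((tendsto_sa t ht).sub (tendsto_sa s hs)).div_const _
    have hval : (t * (π / 2) - s * (π / 2)) / (t ^ 2 - s ^ 2) - g 0 = π / (2 * (s + t)) := by
      simp only [hg, zero_div, Real.arctan_zero, mul_zero, sub_zero, sub_self]
      rw [div_eq_div_iff hst2 (by positivity)]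
      ring
    refine ⟨integrableOn_Ioi_deriv_of_nonneg' hderiv hnonneg htend, ?_⟩
    rw [integral_Ioi_of_hasDerivAt_of_nonneg' hderiv hnonneg htend, hval]

lemma gamma52 : Real.Gamma ((3:ℝ) / 2 + 1) = 3 / 4 * Real.sqrt π := by
  rw [Real.Gamma_add_one (by norm_num)]
  have h32 : (3:ℝ) / 2 = 1 / 2 + 1 := by norm_num
  rw [h32, Real.Gamma_add_one (by norm_num), Real.Gamma_one_half_eq]
  ring

lemma ball3 : ((volume : Measure E3) (Metric.ball 0 1)).toReal = π * (4 / 3) := by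
  rw [EuclideanSpace.volume_ball]
  have hcard : Fintype.card (Fin 3) = 3 := by simp
  rw [hcard]
  have hΓ : Real.Gamma ((3:ℕ) / 2 + 1) = 3 / 4 * Real.sqrt π := by
    push_cast; exact gamma52
  rw [hΓ]
  have hpos : (0:ℝ) < Real.sqrt π := Real.sqrt_pos.2 Real.pi_pos
  rw [ENNReal.toReal_mul, ENNReal.toReal_pow, ENNReal.toReal_ofReal one_pos.le,
    ENNReal.toReal_ofReal (by positivity), one_pow, one_mul]
  have hsq : Real.sqrt π ^ 2 = π := Real.sq_sqrt Real.pi_pos.le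
  field_simp
  nlinarith [hsq, hpos]

lemma threeD_integrable (s t : ℝ) (hs : 0 < s) (ht : 0 < t) :
    Integrable (fun q : E3 => ((‖q‖ ^ 2 + s ^ 2) * (‖q‖ ^ 2 + t ^ 2))⁻¹) := by
  have hcont : Continuous fun q : E3 => ((‖q‖ ^ 2 + s ^ 2) * (‖q‖ ^ 2 + t ^ 2))⁻¹ := by
    apply Continuous.inv₀
    · fun_prop
    · intro q; positivity
  set m1 : ℝ := min 1 (s ^ 2) with hm1
  set m2 : ℝ := min 1 (t ^ 2) with hm2
  have hm1p : 0 < m1 := lt_min one_pos (by positivity)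
  have hm2p : 0 < m2 := lt_min one_pos (by positivity)
  have hfr : (Module.finrank ℝ E3 : ℝ) < 4 := by simp [finrank_euclideanSpace_fin]; norm_num
  refine ((integrable_one_add_norm (E := E3) (μ := volume) hfr).const_mul
    (4 / (m1 * m2))).mono' hcont.aestronglyMeasurable ?_
  refine Eventually.of_forall fun q => ?_
  set n : ℝ := ‖q‖ with hn
  have hn0 : 0 ≤ n := norm_nonneg q
  have h1 : m1 * (1 + n ^ 2) ≤ n ^ 2 + s ^ 2 := by
    have := min_le_left 1 (s ^ 2); have := min_le_right 1 (s ^ 2); nlinarith [sq_nonneg n]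
  have h2 : m2 * (1 + n ^ 2) ≤ n ^ 2 + t ^ 2 := by
    have := min_le_left 1 (t ^ 2); have := min_le_right 1 (t ^ 2); nlinarith [sq_nonneg n]
  have h3 : (1 + n) ^ 2 ≤ 2 * (1 + n ^ 2) := by nlinarith [sq_nonneg (1 - n)]
  have hD : (0:ℝ) < (n ^ 2 + s ^ 2) * (n ^ 2 + t ^ 2) := by positivity
  have hkey : m1 * m2 / 4 * (1 + n) ^ 4 ≤ (n ^ 2 + s ^ 2) * (n ^ 2 + t ^ 2) := by
    have h4 : (1 + n) ^ 4 ≤ 4 * (1 + n ^ 2) ^ 2 := by nlinarith [sq_nonneg ((1+n)^2), h3]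
    have h5 : m1 * (1 + n ^ 2) * (m2 * (1 + n ^ 2)) ≤ (n ^ 2 + s ^ 2) * (n ^ 2 + t ^ 2) :=
      mul_le_mul h1 h2 (by positivity) (by positivity)
    have h6 : m1 * m2 / 4 * (1 + n) ^ 4 ≤ m1 * m2 / 4 * (4 * (1 + n ^ 2) ^ 2) :=
      mul_le_mul_of_nonneg_left h4 (by positivity)
    nlinarith [h5, h6]
  have hrp : (1 + n) ^ (-(4:ℝ)) = ((1 + n) ^ (4:ℕ))⁻¹ := by
    rw [show (-(4:ℝ)) = -((4:ℕ):ℝ) by norm_num, Real.rpow_neg (by positivity),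
      Real.rpow_natCast]
  rw [Real.norm_eq_abs, abs_of_pos (by positivity), hrp]
  calc ((n ^ 2 + s ^ 2) * (n ^ 2 + t ^ 2))⁻¹
      ≤ (m1 * m2 / 4 * (1 + n) ^ 4)⁻¹ := by
        apply inv_anti₀ (by positivity) hkey
    _ = 4 / (m1 * m2) * ((1 + n) ^ (4:ℕ))⁻¹ := by
        rw [mul_inv, inv_div]

lemma threeD_value (s t : ℝ) (hs : 0 < s) (ht : 0 < t) :
    ∫ q : E3, ((‖q‖ ^ 2 + s ^ 2) * (‖q‖ ^ 2 + t ^ 2))⁻¹ = 2 * π ^ 2 / (s + t) := by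
  have hpol := MeasureTheory.integral_fun_norm_addHaar (volume : Measure E3)
    (fun r : ℝ => ((r ^ 2 + s ^ 2) * (r ^ 2 + t ^ 2))⁻¹)
  rw [hpol, measureReal_def, ball3]
  have hfr : Module.finrank ℝ E3 = 3 := by simp [finrank_euclideanSpace_fin]
  rw [hfr]
  have h2 : ∫ y in Ioi (0:ℝ), y ^ (3 - 1) • ((y ^ 2 + s ^ 2) * (y ^ 2 + t ^ 2))⁻¹
      = π / (2 * (s + t)) := by
    rw [← (oneD s t hs ht).2]
    apply setIntegral_congr_fun measurableSet_Ioi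
    intro y _
    simp [smul_eq_mul, div_eq_mul_inv]
  rw [h2, nsmul_eq_mul, smul_eq_mul]
  have hst : (0:ℝ) < s + t := by positivity
  field_simp
  ring

lemma Gshift (m : ℝ) (hm : 0 < m) (lam : ℝ) (p q : E3) :
    Gker m p q + lam = ‖q + (mu m / 2) • p‖ ^ 2 + (nu m * ‖p‖ ^ 2 + lam) := by
  have hmu : mu m ^ 2 / 4 + nu m = 1 := by
    unfold mu nu
    have h1 : m + 1 ≠ 0 := by positivity
    field_simp
    ring
  unfold Gker
  rw [norm_add_sq_real, real_inner_smul_right, norm_smul, mul_pow, Real.norm_eq_abs, sq_abs,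
    real_inner_comm p q]
  nlinarith [hmu, sq_nonneg (‖p‖)]

lemma Gsymm (m : ℝ) (p q : E3) : Gker m p q = Gker m q p := by
  unfold Gker; rw [real_inner_comm]; ring

lemma Gpos (m lam : ℝ) (hm : 0 < m) (hlam : 0 < lam) (p q : E3) : 0 < Gker m p q + lam := by
  have hnu : 0 ≤ nu m := by unfold nu; positivity
  rw [Gshift m hm lam p q]
  have : 0 ≤ nu m * ‖p‖ ^ 2 := mul_nonneg hnu (by positivity)
  positivity

lemma kerInt (m lam lam' : ℝ) (hm : 0 < m) (hlam : 0 < lam) (hlam' : 0 < lam') (p : E3) :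
    Integrable (fun q : E3 => ((Gker m p q + lam) * (Gker m p q + lam'))⁻¹) ∧
      ∫ q : E3, ((Gker m p q + lam) * (Gker m p q + lam'))⁻¹ =
        2 * π ^ 2 / (Real.sqrt (nu m * ‖p‖ ^ 2 + lam) + Real.sqrt (nu m * ‖p‖ ^ 2 + lam')) := by
  have hnu : 0 ≤ nu m := by unfold nu; positivity
  have hnp : 0 ≤ nu m * ‖p‖ ^ 2 := mul_nonneg hnu (by positivity)
  set A : ℝ := nu m * ‖p‖ ^ 2 + lam with hA
  set B : ℝ := nu m * ‖p‖ ^ 2 + lam' with hB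
  have hA0 : 0 < A := by positivity
  have hB0 : 0 < B := by positivity
  set s : ℝ := Real.sqrt A with hsdef
  set t : ℝ := Real.sqrt B with htdef
  have hs : 0 < s := Real.sqrt_pos.2 hA0
  have ht : 0 < t := Real.sqrt_pos.2 hB0
  have hsA : s ^ 2 = A := Real.sq_sqrt hA0.le
  have htB : t ^ 2 = B := Real.sq_sqrt hB0.le
  have hrep : ∀ q : E3, ((Gker m p q + lam) * (Gker m p q + lam'))⁻¹ =
      (fun y : E3 => ((‖y‖ ^ 2 + s ^ 2) * (‖y‖ ^ 2 + t ^ 2))⁻¹) (q + (mu m / 2) • p) := by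
    intro q
    simp only [hsA, htB, hA, hB]
    rw [← Gshift m hm lam p q, ← Gshift m hm lam' p q]
  constructor
  · exact (((threeD_integrable s t hs ht).comp_add_right ((mu m / 2) • p)).congr
      (Eventually.of_forall fun q => (hrep q).symm))
  · calc ∫ q : E3, ((Gker m p q + lam) * (Gker m p q + lam'))⁻¹
        = ∫ q : E3, (fun y : E3 => ((‖y‖ ^ 2 + s ^ 2) * (‖y‖ ^ 2 + t ^ 2))⁻¹)
            (q + (mu m / 2) • p) := by
          exact integral_congr_ae (Eventually.of_forall hrep)
      _ = ∫ y : E3, ((‖y‖ ^ 2 + s ^ 2) * (‖y‖ ^ 2 + t ^ 2))⁻¹ :=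
          integral_add_right_eq_self (μ := volume)
            (fun y : E3 => ((‖y‖ ^ 2 + s ^ 2) * (‖y‖ ^ 2 + t ^ 2))⁻¹) ((mu m / 2) • p)
      _ = 2 * π ^ 2 / (s + t) := threeD_value s t hs ht

end PotAux

end

noncomputable section

open PotAux Real Filter Set

/-- Identity between the double integral of
`(conj f(p) − conj f(q))(f(p) − f(q)) / ((G+λ')(G+λ))` and the single integral
of `conj f(p) (2π² f(p)/(√(ν p²+λ)+√(ν p²+λ')) − ∫ f(q)/((G+λ)(G+λ')) dq)`,
for charges `f` in (the Fourier image of) `H^{−1/2}(ℝ³)`. -/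
theorem potential_scalar_product_identity
    (m lam lam' : ℝ) (hm : 0 < m) (hlam : 0 < lam) (hlam' : 0 < lam')
    (f : E3 → ℂ) (hf : Measurable f)
    (hf2 : Integrable (fun p => (1 + ‖p‖ ^ 2) ^ (-(1 : ℝ) / 2) * ‖f p‖ ^ 2)) :
    (∫ p : E3, ∫ q : E3,
        (star (f p) - star (f q)) * (f p - f q) /
          (((Gker m p q + lam') * (Gker m p q + lam) : ℝ) : ℂ))
    = 2 * ∫ p : E3, star (f p) *
        (((2 * Real.pi ^ 2 : ℝ) : ℂ) * f p /
            ((Real.sqrt (nu m * ‖p‖ ^ 2 + lam) + Real.sqrt (nu m * ‖p‖ ^ 2 + lam') : ℝ) : ℂ)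
          - ∫ q : E3, f q / (((Gker m p q + lam) * (Gker m p q + lam') : ℝ) : ℂ)) := by
  have hnu : 0 ≤ nu m := by unfold nu; positivity
  have hnup : 0 < nu m := by unfold nu; positivity
  have hAp : ∀ p : E3, 0 < nu m * ‖p‖ ^ 2 + lam := fun p => by
    nlinarith [mul_nonneg hnu (sq_nonneg ‖p‖)]
  have hBp : ∀ p : E3, 0 < nu m * ‖p‖ ^ 2 + lam' := fun p => by
    nlinarith [mul_nonneg hnu (sq_nonneg ‖p‖)]
  set K : E3 → E3 → ℝ := fun p q => (Gker m p q + lam) * (Gker m p q + lam') with hKdef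
  set S : E3 → ℝ := fun p =>
    Real.sqrt (nu m * ‖p‖ ^ 2 + lam) + Real.sqrt (nu m * ‖p‖ ^ 2 + lam') with hSdef
  have hKpos : ∀ p q, 0 < K p q := fun p q =>
    mul_pos (Gpos m lam hm hlam p q) (Gpos m lam' hm hlam' p q)
  have hKsymm : ∀ p q, K p q = K q p := fun p q => by
    simp only [hKdef, Gsymm m p q]
  have hSpos : ∀ p, 0 < S p := fun p => by
    have h1 := Real.sqrt_pos.2 (hAp p)
    have h2 := Real.sqrt_pos.2 (hBp p)
    simp only [hSdef]; linarith
  set c : E3 → ℝ := fun p => 2 * π ^ 2 / S p with hcdef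
  have hcpos : ∀ p, 0 < c p := fun p => by
    have := hSpos p
    simp only [hcdef]; positivity
  have hKint : ∀ p, Integrable (fun q => (K p q)⁻¹) := fun p =>
    (kerInt m lam lam' hm hlam hlam' p).1
  have hKval : ∀ p, ∫ q : E3, (K p q)⁻¹ = c p := fun p =>
    (kerInt m lam lam' hm hlam hlam' p).2
  -- bound on c
  set δ : ℝ := min (2 * nu m) (lam + lam') with hδdef
  have hδ : 0 < δ := lt_min (by positivity) (by positivity)
  have hSlow : ∀ p : E3, Real.sqrt δ * Real.sqrt (1 + ‖p‖ ^ 2) ≤ S p := by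
    intro p
    set x : ℝ := ‖p‖ ^ 2 with hx
    have hx0 : 0 ≤ x := sq_nonneg _
    set a : ℝ := Real.sqrt (nu m * x + lam) with ha
    set b : ℝ := Real.sqrt (nu m * x + lam') with hb
    have ha2 : a ^ 2 = nu m * x + lam := Real.sq_sqrt (hAp p).le
    have hb2 : b ^ 2 = nu m * x + lam' := Real.sq_sqrt (hBp p).le
    have ha0 : 0 ≤ a := Real.sqrt_nonneg _
    have hb0 : 0 ≤ b := Real.sqrt_nonneg _
    have h1 : δ * (1 + x) ≤ (a + b) ^ 2 := by
      have hd1 : δ ≤ 2 * nu m := min_le_left _ _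
      have hd2 : δ ≤ lam + lam' := min_le_right _ _
      nlinarith [mul_nonneg ha0 hb0, mul_le_mul_of_nonneg_right hd1 hx0]
    calc Real.sqrt δ * Real.sqrt (1 + x) = Real.sqrt (δ * (1 + x)) :=
          (Real.sqrt_mul hδ.le _).symm
      _ ≤ Real.sqrt ((a + b) ^ 2) := Real.sqrt_le_sqrt h1
      _ = a + b := Real.sqrt_sq (by positivity)
  have hrpow : ∀ p : E3, (1 + ‖p‖ ^ 2) ^ (-(1:ℝ) / 2) = (Real.sqrt (1 + ‖p‖ ^ 2))⁻¹ := by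
    intro p
    rw [Real.sqrt_eq_rpow, ← Real.rpow_neg (by positivity)]
    norm_num
  have hcb : ∀ p : E3, c p ≤ 2 * π ^ 2 / Real.sqrt δ * (1 + ‖p‖ ^ 2) ^ (-(1:ℝ) / 2) := by
    intro p
    have h0 : 0 < Real.sqrt δ * Real.sqrt (1 + ‖p‖ ^ 2) := by
      have := Real.sqrt_pos.2 hδ
      have : (0:ℝ) < Real.sqrt (1 + ‖p‖ ^ 2) := Real.sqrt_pos.2 (by positivity)
      positivity
    have h1 : (S p)⁻¹ ≤ (Real.sqrt δ * Real.sqrt (1 + ‖p‖ ^ 2))⁻¹ :=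
      inv_anti₀ h0 (hSlow p)
    have h2 : c p ≤ 2 * π ^ 2 * (Real.sqrt δ * Real.sqrt (1 + ‖p‖ ^ 2))⁻¹ := by
      have : c p = 2 * π ^ 2 * (S p)⁻¹ := by rw [hcdef]; simp [div_eq_mul_inv]
      rw [this]
      exact mul_le_mul_of_nonneg_left h1 (by positivity)
    calc c p ≤ 2 * π ^ 2 * (Real.sqrt δ * Real.sqrt (1 + ‖p‖ ^ 2))⁻¹ := h2
      _ = 2 * π ^ 2 / Real.sqrt δ * (1 + ‖p‖ ^ 2) ^ (-(1:ℝ) / 2) := by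
          rw [hrpow p, mul_inv, div_eq_mul_inv]; ring
  -- continuity of c
  have hScont : Continuous S := by
    apply Continuous.add
    · exact (Continuous.sqrt (by fun_prop))
    · exact (Continuous.sqrt (by fun_prop))
  have hccont : Continuous c := continuous_const.div hScont fun p => (hSpos p).ne'
  have hI1 : Integrable (fun p : E3 => ‖f p‖ ^ 2 * c p) := by
    refine (hf2.const_mul (2 * π ^ 2 / Real.sqrt δ)).mono'
      (((hf.norm.pow_const 2).mul hccont.measurable).aestronglyMeasurable) ?_
    refine Eventually.of_forall fun p => ?_
    rw [Real.norm_eq_abs, abs_of_nonneg (mul_nonneg (by positivity) (hcpos p).le)]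
    calc ‖f p‖ ^ 2 * c p
        ≤ ‖f p‖ ^ 2 * (2 * π ^ 2 / Real.sqrt δ * (1 + ‖p‖ ^ 2) ^ (-(1:ℝ) / 2)) :=
          mul_le_mul_of_nonneg_left (hcb p) (by positivity)
      _ = 2 * π ^ 2 / Real.sqrt δ * ((1 + ‖p‖ ^ 2) ^ (-(1:ℝ) / 2) * ‖f p‖ ^ 2) := by ring
  -- continuity/measurability of K jointly
  have hGc : Continuous fun z : E3 × E3 => Gker m z.1 z.2 := by
    unfold Gker
    exact ((continuous_fst.norm.pow 2).add (continuous_snd.norm.pow 2)).add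
      (continuous_const.mul continuous_inner)
  have hKc : Continuous fun z : E3 × E3 => K z.1 z.2 := by
    simp only [hKdef]
    exact (hGc.add continuous_const).mul (hGc.add continuous_const)
  have hKzm : Measurable fun z : E3 × E3 => ((K z.1 z.2 : ℝ) : ℂ) :=
    Complex.measurable_ofReal.comp hKc.measurable
  have hfm1 : Measurable fun z : E3 × E3 => f z.1 := hf.comp measurable_fst
  have hfm2 : Measurable fun z : E3 × E3 => f z.2 := hf.comp measurable_snd
  -- the four pieces
  set F1 : E3 × E3 → ℂ := fun z => star (f z.1) * f z.1 / ((K z.1 z.2 : ℝ) : ℂ) with hF1def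
  set F2 : E3 × E3 → ℂ := fun z => star (f z.2) * f z.2 / ((K z.1 z.2 : ℝ) : ℂ) with hF2def
  set F3 : E3 × E3 → ℂ := fun z => star (f z.1) * f z.2 / ((K z.1 z.2 : ℝ) : ℂ) with hF3def
  set F4 : E3 × E3 → ℂ := fun z => star (f z.2) * f z.1 / ((K z.1 z.2 : ℝ) : ℂ) with hF4def
  have hF1m : AEStronglyMeasurable F1 (volume.prod volume) :=
    (((continuous_star.measurable.comp hfm1).mul hfm1).div hKzm).aestronglyMeasurable
  have hF2m : AEStronglyMeasurable F2 (volume.prod volume) :=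
    (((continuous_star.measurable.comp hfm2).mul hfm2).div hKzm).aestronglyMeasurable
  have hF3m : AEStronglyMeasurable F3 (volume.prod volume) :=
    (((continuous_star.measurable.comp hfm1).mul hfm2).div hKzm).aestronglyMeasurable
  have hnorm1 : ∀ z : E3 × E3, ‖F1 z‖ = ‖f z.1‖ ^ 2 * (K z.1 z.2)⁻¹ := by
    intro z
    rw [hF1def]
    simp only
    rw [norm_div, norm_mul, norm_star, Complex.norm_real, Real.norm_eq_abs,
      abs_of_pos (hKpos _ _), div_eq_mul_inv]
    ring
  have hnorm3 : ∀ z : E3 × E3, ‖F3 z‖ = ‖f z.1‖ * ‖f z.2‖ * (K z.1 z.2)⁻¹ := by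
    intro z
    rw [hF3def]
    simp only
    rw [norm_div, norm_mul, norm_star, Complex.norm_real, Real.norm_eq_abs,
      abs_of_pos (hKpos _ _), div_eq_mul_inv]
  have hq_int : ∀ p, Integrable (fun q => ((K p q : ℝ) : ℂ)⁻¹) := by
    intro p
    refine ((hKint p).ofReal (𝕜 := ℂ)).congr (Eventually.of_forall fun q => ?_)
    simp [Complex.ofReal_inv]
  have hF1int : Integrable F1 (volume.prod volume) := by
    refine (integrable_prod_iff hF1m).2 ⟨Eventually.of_forall fun p => ?_, ?_⟩
    · refine ((hq_int p).const_mul (star (f p) * f p)).congr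
        (Eventually.of_forall fun q => ?_)
      rw [hF1def]
      simp only
      rw [div_eq_mul_inv]
    · refine hI1.congr (Eventually.of_forall fun p => ?_)
      have h : ∀ q : E3, ‖F1 (p, q)‖ = ‖f p‖ ^ 2 * (K p q)⁻¹ := fun q => hnorm1 (p, q)
      show ‖f p‖ ^ 2 * c p = ∫ q : E3, ‖F1 (p, q)‖
      rw [integral_congr_ae (Eventually.of_forall h), integral_const_mul, hKval p]
  have hswapmp : MeasurePreserving (Prod.swap : E3 × E3 → E3 × E3)
      ((volume : Measure E3).prod volume) ((volume : Measure E3).prod volume) :=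
    Measure.measurePreserving_swap
  have hF2eq : ∀ z : E3 × E3, F1 (Prod.swap z) = F2 z := by
    intro z
    rw [hF1def, hF2def]
    simp only [Prod.fst_swap, Prod.snd_swap]
    rw [hKsymm z.2 z.1]
  have hF2int : Integrable F2 (volume.prod volume) :=
    ((hswapmp.integrable_comp hF1m).2 hF1int).congr (Eventually.of_forall hF2eq)
  have hF3int : Integrable F3 (volume.prod volume) := by
    refine Integrable.mono' ((hF1int.norm.add hF2int.norm).div_const 2) hF3m
      (Eventually.of_forall fun z => ?_)
    have h2 : ‖F2 z‖ = ‖f z.2‖ ^ 2 * (K z.1 z.2)⁻¹ := by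
      rw [hF2def]
      simp only
      rw [norm_div, norm_mul, norm_star, Complex.norm_real, Real.norm_eq_abs,
        abs_of_pos (hKpos _ _), div_eq_mul_inv]
      ring
    simp only [Pi.add_apply]
    rw [hnorm3 z, hnorm1 z, h2]
    have hk0 : 0 ≤ (K z.1 z.2)⁻¹ := (inv_pos.2 (hKpos _ _)).le
    nlinarith [sq_nonneg (‖f z.1‖ - ‖f z.2‖), mul_nonneg (mul_nonneg (norm_nonneg (f z.1)) (norm_nonneg (f z.2))) hk0,
      mul_le_mul_of_nonneg_right (sq_nonneg (‖f z.1‖ - ‖f z.2‖)) hk0]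
  have hF4eq : ∀ z : E3 × E3, F3 (Prod.swap z) = F4 z := by
    intro z
    rw [hF3def, hF4def]
    simp only [Prod.fst_swap, Prod.snd_swap]
    rw [hKsymm z.2 z.1]
  have hF4int : Integrable F4 (volume.prod volume) :=
    ((hswapmp.integrable_comp hF3m).2 hF3int).congr (Eventually.of_forall hF4eq)
  -- the full integrand
  set F0 : E3 × E3 → ℂ := fun z =>
    (star (f z.1) - star (f z.2)) * (f z.1 - f z.2) / ((K z.1 z.2 : ℝ) : ℂ) with hF0def
  have hF0eq : ∀ z, F0 z = F1 z + F2 z - (F3 z + F4 z) := by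
    intro z
    rw [hF0def, hF1def, hF2def, hF3def, hF4def]
    simp only
    ring
  have hF0int : Integrable F0 (volume.prod volume) :=
    (((hF1int.add hF2int).sub (hF3int.add hF4int)).congr
      (Eventually.of_forall fun z => (hF0eq z).symm))
  -- swap equalities of integrals
  have hI2eq : ∫ z, F2 z ∂(volume.prod volume) = ∫ z, F1 z ∂(volume.prod volume) := by
    rw [← integral_prod_swap F1]
    exact integral_congr_ae (Eventually.of_forall fun z => (hF2eq z).symm)
  have hI4eq : ∫ z, F4 z ∂(volume.prod volume) = ∫ z, F3 z ∂(volume.prod volume) := by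
    rw [← integral_prod_swap F3]
    exact integral_congr_ae (Eventually.of_forall fun z => (hF4eq z).symm)
  -- evaluate ∫ F1
  have hinner1 : ∀ p : E3, ∫ q : E3, F1 (p, q) = star (f p) * f p * ((c p : ℝ) : ℂ) := by
    intro p
    have step : ∀ q : E3, F1 (p, q) = star (f p) * f p * (((K p q)⁻¹ : ℝ) : ℂ) := by
      intro q
      rw [hF1def]
      simp only
      rw [div_eq_mul_inv, Complex.ofReal_inv]
    rw [integral_congr_ae (Eventually.of_forall step), integral_const_mul, ← hKval p]
    congr 1
    exact integral_ofReal
  have hT1 : ∫ z, F1 z ∂(volume.prod volume)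
      = ∫ p : E3, star (f p) * f p * ((c p : ℝ) : ℂ) := by
    calc ∫ z, F1 z ∂(volume.prod volume) = ∫ p : E3, ∫ q : E3, F1 (p, q) :=
          (integral_integral (f := fun p q => F1 (p, q)) hF1int).symm
      _ = ∫ p : E3, star (f p) * f p * ((c p : ℝ) : ℂ) :=
          integral_congr_ae (Eventually.of_forall fun p => hinner1 p)
  -- evaluate ∫ F3
  have hinner3 : ∀ p : E3, ∫ q : E3, F3 (p, q)
      = star (f p) * ∫ q : E3, f q / ((K p q : ℝ) : ℂ) := by
    intro p
    have step : ∀ q : E3, F3 (p, q) = star (f p) * (f q / ((K p q : ℝ) : ℂ)) := by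
      intro q
      rw [hF3def]
      simp only
      rw [mul_div_assoc]
    rw [integral_congr_ae (Eventually.of_forall step), integral_const_mul]
  have hT3 : ∫ z, F3 z ∂(volume.prod volume)
      = ∫ p : E3, star (f p) * ∫ q : E3, f q / ((K p q : ℝ) : ℂ) := by
    calc ∫ z, F3 z ∂(volume.prod volume) = ∫ p : E3, ∫ q : E3, F3 (p, q) :=
          (integral_integral (f := fun p q => F3 (p, q)) hF3int).symm
      _ = ∫ p : E3, star (f p) * ∫ q : E3, f q / ((K p q : ℝ) : ℂ) :=
          integral_congr_ae (Eventually.of_forall fun p => hinner3 p)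
  -- LHS
  have hLHS : (∫ p : E3, ∫ q : E3,
        (star (f p) - star (f q)) * (f p - f q) /
          (((Gker m p q + lam') * (Gker m p q + lam) : ℝ) : ℂ))
      = ∫ z, F0 z ∂(volume.prod volume) := by
    have hpt : ∀ p q : E3, (star (f p) - star (f q)) * (f p - f q) /
        (((Gker m p q + lam') * (Gker m p q + lam) : ℝ) : ℂ) = F0 (p, q) := by
      intro p q
      rw [hF0def]
      simp only
      rw [show (Gker m p q + lam') * (Gker m p q + lam) = K p q from mul_comm _ _]
    calc (∫ p : E3, ∫ q : E3, (star (f p) - star (f q)) * (f p - f q) /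
          (((Gker m p q + lam') * (Gker m p q + lam) : ℝ) : ℂ))
        = ∫ p : E3, ∫ q : E3, F0 (p, q) := by
          refine integral_congr_ae (Eventually.of_forall fun p => ?_)
          exact integral_congr_ae (Eventually.of_forall fun q => hpt p q)
      _ = ∫ z, F0 z ∂(volume.prod volume) :=
          integral_integral (f := fun p q => F0 (p, q)) hF0int
  -- integrability of the two RHS pieces
  have hg1int : Integrable (fun p : E3 => star (f p) * f p * ((c p : ℝ) : ℂ)) := by
    refine hI1.mono' ?_ (Eventually.of_forall fun p => ?_)
    · exact (((continuous_star.measurable.comp hf).mul hf).mul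
        (Complex.measurable_ofReal.comp hccont.measurable)).aestronglyMeasurable
    · rw [norm_mul, norm_mul, norm_star, Complex.norm_real, Real.norm_eq_abs,
        abs_of_pos (hcpos p)]
      have : ‖f p‖ * ‖f p‖ * c p = ‖f p‖ ^ 2 * c p := by ring
      rw [this]
  have hg2int : Integrable (fun p : E3 => star (f p) * ∫ q : E3, f q / ((K p q : ℝ) : ℂ)) := by
    refine (hF3int.integral_prod_left).congr (Eventually.of_forall fun p => ?_)
    exact hinner3 p
  -- RHS
  have hg1eq : ∀ p : E3, star (f p) * (((2 * Real.pi ^ 2 : ℝ) : ℂ) * f p / ((S p : ℝ) : ℂ))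
      = star (f p) * f p * ((c p : ℝ) : ℂ) := by
    intro p
    rw [hcdef]
    simp only
    rw [Complex.ofReal_div]
    push_cast
    ring
  have hRHS : (2 * ∫ p : E3, star (f p) *
        (((2 * Real.pi ^ 2 : ℝ) : ℂ) * f p / ((S p : ℝ) : ℂ)
          - ∫ q : E3, f q / ((K p q : ℝ) : ℂ)))
      = 2 * ((∫ p : E3, star (f p) * f p * ((c p : ℝ) : ℂ))
          - ∫ p : E3, star (f p) * ∫ q : E3, f q / ((K p q : ℝ) : ℂ)) := by
    congr 1
    rw [← integral_sub hg1int hg2int]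
    refine integral_congr_ae (Eventually.of_forall fun p => ?_)
    show star (f p) * (((2 * Real.pi ^ 2 : ℝ) : ℂ) * f p / ((S p : ℝ) : ℂ)
          - ∫ q : E3, f q / ((K p q : ℝ) : ℂ))
        = star (f p) * f p * ((c p : ℝ) : ℂ)
          - star (f p) * ∫ q : E3, f q / ((K p q : ℝ) : ℂ)
    rw [mul_sub, hg1eq p]
  rw [hLHS, hRHS]
  have hadd12 : Integrable (fun z : E3 × E3 => F1 z + F2 z) (volume.prod volume) :=
    hF1int.add hF2int
  have hadd34 : Integrable (fun z : E3 × E3 => F3 z + F4 z) (volume.prod volume) :=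
    hF3int.add hF4int
  rw [integral_congr_ae (Eventually.of_forall hF0eq), integral_sub hadd12 hadd34,
    integral_add hF1int hF2int, integral_add hF3int hF4int, hI2eq, hI4eq, hT1, hT3]
  ring
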